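/- For every real x > 0, the quantity F₂(x) = 2·(1 + 1·(x·coth x − 1)/sinh²(x)) = 2·(1 − (1 − x·coth x)/sinh²(x)) satisfies 2 < F₂(x) ≤ 8/3. -/

import Mathlib

lemma sinh_lt_mul_cosh_aux {x : ℝ} (hx : 0 < x) : Real.sinh x < x * Real.cosh x := by
  have key : StrictMonoOn (fun y : ℝ => y * Real.cosh y - Real.sinh y) (Set.Ici 0) := by
    apply strictMonoOn_of_deriv_pos (convex_Ici 0)
    · exact ((continuous_id.mul Real.continuous_cosh).sub Real.continuous_sinh).continuousOn
    · intro y hy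
      rw [interior_Ici] at hy
      have h : HasDerivAt (fun y : ℝ => y * Real.cosh y - Real.sinh y)
          (1 * Real.cosh y + y * Real.sinh y - Real.cosh y) y :=
        ((hasDerivAt_id y).mul (Real.hasDerivAt_cosh y)).sub (Real.hasDerivAt_sinh y)
      have hy' : (0:ℝ) < y := hy
      rw [h.deriv]
      nlinarith [Real.sinh_pos_iff.mpr hy', hy']
  have := key Set.self_mem_Ici (Set.mem_Ici.mpr hx.le) hx
  simpa using this

lemma cube_ineq_aux {x : ℝ} (hx : 0 ≤ x) :
    3 * (x * Real.cosh x - Real.sinh x) ≤ Real.sinh x ^ 3 := by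
  have hd : ∀ y : ℝ, HasDerivAt
      (fun y : ℝ => Real.sinh y ^ 3 - 3 * (y * Real.cosh y) + 3 * Real.sinh y)
      (3 * Real.sinh y ^ 2 * Real.cosh y - 3 * (1 * Real.cosh y + y * Real.sinh y)
        + 3 * Real.cosh y) y := by
    intro y
    have h1 : HasDerivAt (fun y : ℝ => Real.sinh y ^ 3)
        ((3 : ℕ) * Real.sinh y ^ 2 * Real.cosh y) y := by
      simpa using (Real.hasDerivAt_sinh y).fun_pow 3
    have h2 : HasDerivAt (fun y : ℝ => 3 * (y * Real.cosh y))
        (3 * (1 * Real.cosh y + y * Real.sinh y)) y :=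
      ((hasDerivAt_id y).mul (Real.hasDerivAt_cosh y)).const_mul 3
    have h3 : HasDerivAt (fun y : ℝ => 3 * Real.sinh y) (3 * Real.cosh y) y :=
      (Real.hasDerivAt_sinh y).const_mul 3
    have := (h1.fun_sub h2).fun_add h3
    simpa using this
  have key : MonotoneOn
      (fun y : ℝ => Real.sinh y ^ 3 - 3 * (y * Real.cosh y) + 3 * Real.sinh y)
      (Set.Ici 0) := by
    apply monotoneOn_of_deriv_nonneg (convex_Ici 0)
    · exact Continuous.continuousOn (by continuity)
    · intro y hy
      exact (hd y).differentiableAt.differentiableWithinAt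
    · intro y hy
      rw [interior_Ici] at hy
      have hy' : (0:ℝ) < y := hy
      rw [(hd y).deriv]
      have hsy : 0 < Real.sinh y := Real.sinh_pos_iff.mpr hy'
      have h2y : 2 * y < Real.sinh (2 * y) := Real.self_lt_sinh_iff.mpr (by linarith)
      have hsm : Real.sinh (2 * y) = 2 * Real.sinh y * Real.cosh y := Real.sinh_two_mul y
      nlinarith [Real.one_le_cosh y, sq_nonneg (Real.sinh y)]
  have h0 := key Set.self_mem_Ici (Set.mem_Ici.mpr hx) hx
  simp only [Real.sinh_zero, Real.cosh_zero] at h0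
  nlinarith [h0]

/-- For every `x > 0`, `F₂ x = 2 (1 - (1 - x coth x)/sinh² x)` satisfies
`2 < F₂ x ≤ 8/3`, where `coth x = cosh x / sinh x`. -/
theorem two_lt_F_two_le_eight_thirds (x : ℝ) (hx : 0 < x) :
    2 < 2 * (1 - (1 - x * (Real.cosh x / Real.sinh x)) / (Real.sinh x) ^ 2) ∧
    2 * (1 - (1 - x * (Real.cosh x / Real.sinh x)) / (Real.sinh x) ^ 2) ≤ 8/3 := by
  have hs : 0 < Real.sinh x := Real.sinh_pos_iff.mpr hx
  have h1 : Real.sinh x < x * Real.cosh x := sinh_lt_mul_cosh_aux hx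
  have h2 : 3 * (x * Real.cosh x - Real.sinh x) ≤ Real.sinh x ^ 3 := cube_ineq_aux hx.le
  have e : (1 - x * (Real.cosh x / Real.sinh x)) / (Real.sinh x) ^ 2
      = (Real.sinh x - x * Real.cosh x) / (Real.sinh x) ^ 3 := by
    rw [div_eq_div_iff (by positivity) (by positivity)]
    field_simp
  rw [e]
  constructor
  · have : (Real.sinh x - x * Real.cosh x) / (Real.sinh x) ^ 3 < 0 :=
      div_neg_of_neg_of_pos (by linarith) (by positivity)
    linarith
  · have : -1/3 ≤ (Real.sinh x - x * Real.cosh x) / (Real.sinh x) ^ 3 := by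
      rw [div_le_div_iff₀ (by norm_num) (by positivity)]
      nlinarith
    linarith
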